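/- Let k be an algebraically closed field of characteristic p > 0 and let d ≥ 1. Let R be a standard-graded k-algebra which is a normal domain (an integral domain integrally closed in its field of fractions), and let φ : P → R be an injective degree-preserving k-algebra homomorphism from the standard-graded polynomial ring P = k[x_0, …, x_d] such that R is a finitely generated P-module (a graded Noether normalization). Let n ≥ d+1, let g_1, …, g_n ∈ P be homogeneous of degrees a_1, …, a_n, and let m ∈ ℕ be such that every homogeneous polynomial of degree m lies in the ideal (g_1, …, g_n) of P. Then every homogeneous element of R of degree m + d + 1 lies in the Frobenius closure of the ideal (φ(g_1), …, φ(g_n)) of R. -/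

import Mathlib

open scoped BigOperators

/-- The `q`-th bracket power `I^{[q]}` of an ideal: the ideal generated by all `q`-th
powers of elements of `I`. -/
def bracketPow {R : Type*} [CommRing R] (I : Ideal R) (q : ℕ) : Ideal R :=
  Ideal.span ((fun f => f ^ q) '' (I : Set R))

/-- Frobenius closure of an ideal in a ring of characteristic `p`. -/
def frobeniusClosure {R : Type*} [CommRing R] (p : ℕ) (I : Ideal R) : Set R :=
  {x | ∃ e : ℕ, x ^ p ^ e ∈ bracketPow I (p ^ e)}

section Auxiliary

open MvPolynomial DirectSum

lemma pow_mem_span_pow_image {A : Type*} [CommRing A] (p : ℕ) [Fact p.Prime] [CharP A p]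
    (S : Set A) {z : A} (hz : z ∈ Ideal.span S) (e : ℕ) :
    z ^ p ^ e ∈ Ideal.span ((fun f => f ^ p ^ e) '' S) := by
  induction hz using Submodule.span_induction with
  | mem x hx => exact Ideal.subset_span ⟨x, hx, rfl⟩
  | zero =>
      rw [zero_pow (pow_pos (Fact.out : p.Prime).pos e).ne']
      exact Ideal.zero_mem _
  | add x y hx hy ihx ihy => rw [add_pow_char_pow]; exact Ideal.add_mem _ ihx ihy
  | smul r x hx ih => rw [smul_eq_mul, mul_pow]; exact Ideal.mul_mem_left _ _ ih

lemma Finsupp.degree_add' {σ : Type*} (f g : σ →₀ ℕ) :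
    (f + g).degree = f.degree + g.degree := by
  simp only [Finsupp.degree_eq_weight_one, map_add]

lemma Finsupp.degree_nsmul' {σ : Type*} (q : ℕ) (f : σ →₀ ℕ) :
    (q • f).degree = q * f.degree := by
  simp only [Finsupp.degree_eq_weight_one, map_nsmul, smul_eq_mul]

lemma Finsupp.degree_single' {σ : Type*} (i : σ) (c : ℕ) :
    (Finsupp.single i c).degree = c := by
  simp [Finsupp.degree_eq_weight_one, Finsupp.weight_apply, Finsupp.sum_single_index]

lemma exists_degree_split {σ : Type*} (m : ℕ) : ∀ (β : σ →₀ ℕ), m ≤ β.degree →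
    ∃ δ ε : σ →₀ ℕ, β = δ + ε ∧ δ.degree = m := by
  induction m with
  | zero => exact fun β _ => ⟨0, β, (zero_add β).symm, map_zero _⟩
  | succ m ih =>
    intro β hβ
    obtain ⟨δ, ε, hβδ, hδ⟩ := ih β (le_trans (Nat.le_succ m) hβ)
    have hε : ε ≠ 0 := by
      rintro rfl
      rw [hβδ, Finsupp.degree_add', map_zero, add_zero] at hβ
      omega
    obtain ⟨i, hi⟩ : ∃ i, ε i ≠ 0 := by
      by_contra h
      push_neg at h
      exact hε (Finsupp.ext h)
    refine ⟨δ + Finsupp.single i 1, ε - Finsupp.single i 1, ?_, ?_⟩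
    · rw [hβδ]
      ext j
      rcases eq_or_ne i j with rfl | hij
      · simp only [Finsupp.add_apply, Finsupp.tsub_apply, Finsupp.single_eq_same]
        omega
      · simp only [Finsupp.add_apply, Finsupp.tsub_apply, Finsupp.single_eq_of_ne' hij]
        omega
    · rw [Finsupp.degree_add', Finsupp.degree_single', hδ]

lemma key_poly {σ : Type*} [Fintype σ] {K : Type*} [Field K] (p : ℕ) [Fact p.Prime] [CharP K p]
    {ν : Type*} (g : ν → MvPolynomial σ K) (m : ℕ)
    (hm : ∀ f : MvPolynomial σ K, f.IsHomogeneous m → f ∈ Ideal.span (Set.range g))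
    (e D : ℕ) (hD : m * p ^ e + Fintype.card σ * (p ^ e - 1) < D + p ^ e)
    (f : MvPolynomial σ K) (hf : f.IsHomogeneous D) :
    f ∈ Ideal.span (Set.range fun i => g i ^ p ^ e) := by
  classical
  have hq1 : 1 ≤ p ^ e := Nat.one_le_pow _ _ (Fact.out : p.Prime).pos
  have himg : ((fun x => x ^ p ^ e) '' Set.range g) = Set.range fun i => g i ^ p ^ e := by
    rw [← Set.range_comp]; rfl
  rw [← support_sum_monomial_coeff f]
  apply Ideal.sum_mem
  intro α hα
  have hdeg : α.degree = D := by
    have := hf (mem_support_iff.mp hα)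
    rwa [Finsupp.degree_eq_weight_one]
  set β : σ →₀ ℕ := α.mapRange (· / p ^ e) (Nat.zero_div _) with hβdef
  set γ : σ →₀ ℕ := α.mapRange (· % p ^ e) (Nat.zero_mod _) with hγdef
  have hαsplit : α = γ + p ^ e • β := by
    ext i
    simp only [Finsupp.add_apply, Finsupp.smul_apply, Finsupp.mapRange_apply, hβdef, hγdef,
      smul_eq_mul]
    exact (Nat.mod_add_div _ _).symm
  have hγdeg : γ.degree ≤ Fintype.card σ * (p ^ e - 1) := by
    have : γ.degree ≤ ∑ i : σ, γ i :=
      Finset.sum_le_sum_of_subset (Finset.subset_univ _)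
    refine this.trans ?_
    rw [← Finset.card_univ, ← smul_eq_mul, ← Finset.sum_const]
    apply Finset.sum_le_sum
    intro i _
    simp only [Finsupp.mapRange_apply, hγdef]
    have := Nat.mod_lt (α i) (show 0 < p ^ e by omega)
    omega
  have hβdeg : m ≤ β.degree := by
    have hsum : α.degree = γ.degree + p ^ e * β.degree := by
      rw [hαsplit, Finsupp.degree_add', Finsupp.degree_nsmul']
    rw [hdeg] at hsum
    have h1 : m * p ^ e < p ^ e * β.degree + p ^ e := by omega
    have h2 : p ^ e * m < p ^ e * (β.degree + 1) := by
      rw [Nat.mul_add, Nat.mul_one]; rw [Nat.mul_comm] at h1; exact h1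
    exact Nat.lt_succ_iff.mp (Nat.lt_of_mul_lt_mul_left h2)
  obtain ⟨δ, ε, hβδ, hδm⟩ := exists_degree_split m β hβdeg
  have h1 : monomial δ (1 : K) ∈ Ideal.span (Set.range g) :=
    hm _ (isHomogeneous_monomial _ hδm)
  have h2 : (monomial δ (1 : K)) ^ p ^ e ∈ Ideal.span (Set.range fun i => g i ^ p ^ e) := by
    rw [← himg]; exact pow_mem_span_pow_image p _ h1 e
  have hfact : monomial α (coeff α f) =
      (monomial γ (coeff α f) * (monomial ε (1 : K)) ^ p ^ e) * (monomial δ (1 : K)) ^ p ^ e := by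
    rw [monomial_pow, monomial_pow, monomial_mul, monomial_mul]
    congr 1
    · rw [hαsplit, hβδ, smul_add]; abel_nf
    · simp
  rw [hfact]
  exact Ideal.mul_mem_left _ _ h2


lemma homog_decomp_mem {k R σ' : Type*} [Field k] [CommRing R] [Algebra k R]
    (𝒜 : ℕ → Submodule k R) [GradedAlgebra 𝒜]
    (φ : MvPolynomial σ' k →ₐ[k] R)
    (hφdeg : ∀ (n : ℕ) (f : MvPolynomial σ' k), f.IsHomogeneous n → φ f ∈ 𝒜 n)
    (V : Finset R) (bnd : ℕ)
    (hV : ∀ u ∈ V, ∃ b ≤ bnd, u ∈ 𝒜 b)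
    (hspan : ∀ x : R, ∃ c : R → MvPolynomial σ' k, x = ∑ u ∈ V, φ (c u) * u)
    (N : ℕ) (J : Ideal R)
    (hJ : ∀ (Dg b : ℕ), Dg + b = N → b ≤ bnd →
      ∀ f : MvPolynomial σ' k, f.IsHomogeneous Dg → ∀ u ∈ 𝒜 b, φ f * u ∈ J) :
    ∀ x ∈ 𝒜 N, x ∈ J := by
  classical
  intro x hx
  obtain ⟨c, hc⟩ := hspan x
  have hproj : x = GradedRing.proj 𝒜 N x := by
    rw [GradedRing.proj_apply, DirectSum.decompose_of_mem_same 𝒜 hx]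
  rw [hproj, hc, map_sum]
  apply Ideal.sum_mem
  intro u hu
  obtain ⟨b, hb, hub⟩ := hV u hu
  rw [← MvPolynomial.sum_homogeneousComponent (c u), map_sum, Finset.sum_mul, map_sum]
  apply Ideal.sum_mem
  intro Dg _
  have ht : φ (homogeneousComponent Dg (c u)) * u ∈ 𝒜 (Dg + b) :=
    SetLike.mul_mem_graded (hφdeg _ _ (homogeneousComponent_isHomogeneous Dg (c u))) hub
  by_cases hcase : Dg + b = N
  · rw [GradedRing.proj_apply, DirectSum.decompose_of_mem_same 𝒜 (hcase ▸ ht)]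
    exact hJ Dg b hcase hb _ (homogeneousComponent_isHomogeneous Dg (c u)) u hub
  · rw [GradedRing.proj_apply, DirectSum.decompose_of_mem_ne 𝒜 ht hcase]
    exact J.zero_mem

end Auxiliary

open MvPolynomial DirectSum in
theorem generic_frobenius_closure_bound
    {k : Type*} [Field k] [IsAlgClosed k] (p : ℕ) [Fact p.Prime] [CharP k p]
    (d : ℕ) (hd : 1 ≤ d)
    {R : Type*} [CommRing R] [IsNoetherianRing R] [Algebra k R]
    [IsDomain R] [IsIntegrallyClosed R]
    (𝒜 : ℕ → Submodule k R) [GradedAlgebra 𝒜]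
    (hstd : ∀ n, 𝒜 n = 𝒜 1 ^ n)
    (hfd : FiniteDimensional k (𝒜 1))
    (φ : MvPolynomial (Fin (d + 1)) k →ₐ[k] R)
    (hφinj : Function.Injective φ)
    (hφdeg : ∀ (n : ℕ) (f : MvPolynomial (Fin (d + 1)) k),
      f.IsHomogeneous n → φ f ∈ 𝒜 n)
    (hfin : RingHom.Finite φ.toRingHom)
    (n : ℕ) (hn : d + 1 ≤ n)
    (g : Fin n → MvPolynomial (Fin (d + 1)) k) (a : Fin n → ℕ)
    (hg : ∀ i, (g i).IsHomogeneous (a i))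
    (m : ℕ)
    (hm : ∀ f : MvPolynomial (Fin (d + 1)) k, f.IsHomogeneous m →
      f ∈ Ideal.span (Set.range g)) :
    ∀ r ∈ 𝒜 (m + d + 1),
      r ∈ frobeniusClosure p (Ideal.span (Set.range fun i => φ (g i))) := by
  classical
  intro r hr
  -- finite module structure
  letI : Algebra (MvPolynomial (Fin (d + 1)) k) R := φ.toRingHom.toAlgebra
  haveI hfinM : Module.Finite (MvPolynomial (Fin (d + 1)) k) R := hfin
  obtain ⟨s, hs⟩ := hfinM.fg_top
  -- homogeneous components of the generators
  set T : Finset (ℕ × R) := s.biUnion (fun v =>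
    (DirectSum.decompose 𝒜 v).support.image fun i => (i, ((DirectSum.decompose 𝒜 v) i : R)))
    with hTdef
  set V : Finset R := T.image Prod.snd with hVdef
  set B : ℕ := T.sup Prod.fst with hBdef
  have hV : ∀ u ∈ V, ∃ b ≤ B, u ∈ 𝒜 b := by
    intro u hu
    obtain ⟨⟨b, u'⟩, hmem, heq⟩ := Finset.mem_image.mp hu
    obtain ⟨v, hv, hpair⟩ := Finset.mem_biUnion.mp hmem
    obtain ⟨i, _, heq2⟩ := Finset.mem_image.mp hpair
    refine ⟨b, Finset.le_sup (f := Prod.fst) hmem, ?_⟩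
    have hb : i = b := congrArg Prod.fst heq2
    have hu' : ((DirectSum.decompose 𝒜 v) i : R) = u' := congrArg Prod.snd heq2
    rw [← heq, ← hu', ← hb]
    exact ((DirectSum.decompose 𝒜 v) i).2
  have hVtop : Submodule.span (MvPolynomial (Fin (d + 1)) k) (V : Set R) = ⊤ := by
    rw [eq_top_iff, ← hs]
    apply Submodule.span_le.mpr
    intro v hv
    rw [← DirectSum.sum_support_decompose 𝒜 v]
    apply Submodule.sum_mem
    intro i hi
    apply Submodule.subset_span
    refine Finset.mem_coe.mpr (Finset.mem_image.mpr ⟨(i, ((DirectSum.decompose 𝒜 v) i : R)),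
      Finset.mem_biUnion.mpr ⟨v, hv, Finset.mem_image.mpr ⟨i, hi, rfl⟩⟩, rfl⟩)
  have hspan : ∀ x : R, ∃ c : R → MvPolynomial (Fin (d + 1)) k,
      x = ∑ u ∈ V, φ (c u) * u := by
    intro x
    have hx : x ∈ Submodule.span (MvPolynomial (Fin (d + 1)) k) (V : Set R) := by
      rw [hVtop]; trivial
    obtain ⟨c, -, hc⟩ := Submodule.mem_span_finset.mp hx
    refine ⟨c, ?_⟩
    rw [← hc]
    refine Finset.sum_congr rfl fun u _ => ?_
    rw [Algebra.smul_def]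
    rfl
  -- choose e
  have hp2 : 2 ≤ p := (Fact.out : p.Prime).two_le
  have hBq : B < p ^ B := Nat.lt_pow_self (n := B) (by omega)
  have hq1 : 1 ≤ p ^ B := by omega
  refine ⟨B, ?_⟩
  set q : ℕ := p ^ B with hqdef
  have hrq : r ^ q ∈ 𝒜 (q * (m + d + 1)) := by
    have := SetLike.pow_mem_graded q hr
    rwa [smul_eq_mul] at this
  refine homog_decomp_mem 𝒜 φ hφdeg V B hV hspan (q * (m + d + 1))
    (bracketPow (Ideal.span (Set.range fun i => φ (g i))) q) ?_ (r ^ q) hrq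
  intro Dg b hDb hbB f hf u hu
  have harith : m * q + Fintype.card (Fin (d + 1)) * (q - 1) < Dg + q := by
    rw [Fintype.card_fin]
    have h1 : (d + 1) * (q - 1) < (d + 1) * q :=
      Nat.mul_lt_mul_of_le_of_lt (le_refl (d+1)) (by omega) (by omega)
    have h2 : q * (m + d + 1) = m * q + (d + 1) * q := by ring
    omega
  have hfmem : f ∈ Ideal.span (Set.range fun i => g i ^ q) :=
    key_poly p g m hm B Dg harith f hf
  have hmap : φ f ∈ Ideal.span (Set.range fun i => φ (g i) ^ q) := by
    have h3 : φ f ∈ Ideal.map φ.toRingHom (Ideal.span (Set.range fun i => g i ^ q)) :=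
      Ideal.mem_map_of_mem _ hfmem
    rw [Ideal.map_span, ← Set.range_comp] at h3
    convert h3 using 3
    funext i
    simp [Function.comp, map_pow]
  have hsub : Ideal.span (Set.range fun i => φ (g i) ^ q) ≤
      bracketPow (Ideal.span (Set.range fun i => φ (g i))) q := by
    apply Ideal.span_le.mpr
    rintro _ ⟨i, rfl⟩
    exact Ideal.subset_span ⟨φ (g i), Ideal.subset_span ⟨i, rfl⟩, rfl⟩
  exact Ideal.mul_mem_right u _ (hsub hmap)
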